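/- Let ε ∈ (0, 1], δ ∈ (0, 1), and Δ > 0. Let P_i and P_j be probability measures on ℝ and let π be a coupling of P_i and P_j such that |x − x'| ≤ Δ for π-almost every pair (x, x'). Let θ ≥ (Δ/ε)·√(2·log(1.25/δ)), and for s ∈ {i, j} let Q_s be the law of X + N where X has law P_s and N is an independent centered Gaussian random variable with standard deviation θ (equivalently, Q_s(A) = ∫ γ_{x,θ²}(A) dP_s(x), where γ_{x,θ²} is the Gaussian measure on ℝ with mean x and variance θ²). Then for every Borel set A ⊆ ℝ, Q_i(A) ≤ exp(ε)·Q_j(A) + δ and Q_j(A) ≤ exp(ε)·Q_i(A) + δ. -/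

import Mathlib

open MeasureTheory ProbabilityTheory

namespace PufferfishAux

open Real Set

lemma measurable_gaussianReal_fun (v : NNReal) :
    Measurable (fun x : ℝ => gaussianReal x v) := by
  by_cases hv : v = 0
  · simp only [hv, gaussianReal_zero_var]
    exact Measure.measurable_dirac
  · apply Measure.measurable_of_measurable_coe
    intro s hs
    simp_rw [gaussianReal_apply _ hv]
    have hm : Measurable (fun p : ℝ × ℝ => gaussianPDF p.1 v p.2) := by
      apply ENNReal.measurable_ofReal.comp
      unfold gaussianPDFReal
      fun_prop
    exact hm.lintegral_prod_right'

lemma gaussianReal_map_neg (v : NNReal) :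
    (gaussianReal 0 v).map (fun x : ℝ => -x) = gaussianReal 0 v := by
  have h := gaussianReal_map_const_mul (μ := 0) (v := v) (-1)
  have h2 : (⟨(-1:ℝ)^2, sq_nonneg _⟩ : NNReal) = 1 := by
    ext; norm_num
  simp only [neg_one_mul, mul_zero, h2, one_mul] at h
  rw [h]; congr 1; ext; norm_num

lemma gaussianReal_Iio_eq_Ioi {v : NNReal} (s : ℝ) :
    gaussianReal 0 v (Iio s) = gaussianReal 0 v (Ioi (-s)) := by
  conv_lhs => rw [← gaussianReal_map_neg v]
  rw [Measure.map_apply measurable_neg measurableSet_Iio]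
  congr 1
  ext x
  simp [neg_lt, lt_neg]

lemma gaussianReal_Ici_self (μ : ℝ) {v : NNReal} (hv : v ≠ 0) :
    gaussianReal μ v (Ici μ) = 1 / 2 := by
  have hmap : gaussianReal μ v = (gaussianReal 0 v).map (· + μ) := by
    rw [gaussianReal_map_add_const, zero_add]
  have h0 : gaussianReal μ v (Ici μ) = gaussianReal 0 v (Ici 0) := by
    rw [hmap, Measure.map_apply (measurable_add_const μ) measurableSet_Ici]
    congr 1
    ext x; simp
  have hatom : gaussianReal 0 v ({0} : Set ℝ) = 0 :=
    gaussianReal_absolutelyContinuous 0 hv (by simp)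
  have hIic : gaussianReal 0 v (Iic (0:ℝ)) = gaussianReal 0 v (Ici (0:ℝ)) := by
    conv_rhs => rw [← gaussianReal_map_neg v]
    rw [Measure.map_apply measurable_neg measurableSet_Ici]
    congr 1
    ext x; simp
  have hIoi : gaussianReal 0 v (Ioi (0:ℝ)) = gaussianReal 0 v (Ici (0:ℝ)) := by
    apply le_antisymm (measure_mono Ioi_subset_Ici_self)
    calc gaussianReal 0 v (Ici (0:ℝ)) ≤ gaussianReal 0 v (Ioi 0 ∪ {0}) := by
          apply measure_mono; intro x hx
          rcases eq_or_lt_of_le (Set.mem_Ici.mp hx) with h | h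
          · exact Or.inr (by simp [h.symm])
          · exact Or.inl h
      _ ≤ gaussianReal 0 v (Ioi 0) + gaussianReal 0 v ({0} : Set ℝ) := measure_union_le _ _
      _ = gaussianReal 0 v (Ioi 0) := by rw [hatom, add_zero]
  have hsum : gaussianReal 0 v (Iic (0:ℝ)) + gaussianReal 0 v (Ioi (0:ℝ)) = 1 := by
    rw [← measure_univ (μ := gaussianReal 0 v)]
    rw [← measure_union (by simp [Set.disjoint_left]) measurableSet_Ioi]
    congr 1
    ext x; simp [le_or_gt]
  rw [hIic, hIoi] at hsum
  rw [h0]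
  rw [ENNReal.eq_div_iff (by norm_num) (by norm_num)]
  rw [two_mul]
  exact hsum

/-- Gaussian tail bound via density comparison. -/
lemma gaussian_tail {v : NNReal} (hv : v ≠ 0) {t : ℝ} (ht : 0 ≤ t) :
    gaussianReal 0 v (Ici t) ≤ ENNReal.ofReal (rexp (-t ^ 2 / (2 * v)) / 2) := by
  have hv0 : (0:ℝ) < (v:ℝ) := by
    have : (0:NNReal) < v := pos_iff_ne_zero.mpr hv
    exact_mod_cast this
  have key : ∀ x ∈ Ici t,
      gaussianPDF 0 v x ≤ ENNReal.ofReal (rexp (-t ^ 2 / (2 * v))) * gaussianPDF t v x := by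
    intro x hx
    have hxt : t ≤ x := hx
    rw [gaussianPDF, gaussianPDF, ← ENNReal.ofReal_mul (by positivity)]
    apply ENNReal.ofReal_le_ofReal
    unfold gaussianPDFReal
    have hexp : rexp (-(x - 0) ^ 2 / (2 * (v:ℝ)))
        ≤ rexp (-t ^ 2 / (2 * (v:ℝ))) * rexp (-(x - t) ^ 2 / (2 * (v:ℝ))) := by
      rw [← Real.exp_add]
      apply Real.exp_le_exp.mpr
      rw [← add_div]
      apply (div_le_div_iff_of_pos_right (by positivity : (0:ℝ) < 2 * (v:ℝ))).mpr
      nlinarith [mul_le_mul_of_nonneg_left hxt ht]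
    exact le_trans (mul_le_mul_of_nonneg_left hexp (by positivity)) (le_of_eq (by ring))
  calc gaussianReal 0 v (Ici t) = ∫⁻ x in Ici t, gaussianPDF 0 v x :=
        gaussianReal_apply 0 hv _
    _ ≤ ∫⁻ x in Ici t, ENNReal.ofReal (rexp (-t ^ 2 / (2 * v))) * gaussianPDF t v x :=
        setLIntegral_mono ((measurable_gaussianPDF t v).const_mul _) key
    _ = ENNReal.ofReal (rexp (-t ^ 2 / (2 * v))) * gaussianReal t v (Ici t) := by
        rw [lintegral_const_mul _ (measurable_gaussianPDF t v), gaussianReal_apply t hv]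
    _ = ENNReal.ofReal (rexp (-t ^ 2 / (2 * v))) * ENNReal.ofReal (1 / 2) := by
        rw [gaussianReal_Ici_self t hv]
        norm_num [ENNReal.ofReal_div_of_pos]
    _ = ENNReal.ofReal (rexp (-t ^ 2 / (2 * v)) / 2) := by
        rw [← ENNReal.ofReal_mul (by positivity)]
        ring_nf

/-- Gaussian strip bound: density is bounded by `(√(2πv))⁻¹`. -/
lemma gaussian_strip {v : NNReal} (hv : v ≠ 0) {τ : ℝ} (hτ : τ ≤ 0) :
    gaussianReal 0 v (Ioc τ 0) ≤ ENNReal.ofReal ((-τ) * (Real.sqrt (2 * π * v))⁻¹) := by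
  rw [gaussianReal_apply 0 hv]
  calc ∫⁻ x in Ioc τ 0, gaussianPDF 0 v x
      ≤ ∫⁻ _ in Ioc τ 0, ENNReal.ofReal ((Real.sqrt (2 * π * v))⁻¹) := by
        apply setLIntegral_mono measurable_const
        intro x _
        rw [gaussianPDF]
        apply ENNReal.ofReal_le_ofReal
        unfold gaussianPDFReal
        nth_rewrite 2 [← mul_one ((Real.sqrt (2 * π * v))⁻¹)]
        apply mul_le_mul_of_nonneg_left _ (by positivity)
        apply Real.exp_le_one_iff.mpr  -- name check
        apply div_nonpos_of_nonpos_of_nonneg (neg_nonpos.mpr (sq_nonneg _)) (by positivity)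
    _ = ENNReal.ofReal ((Real.sqrt (2 * π * v))⁻¹) * volume (Ioc τ 0) := setLIntegral_const _ _
    _ = ENNReal.ofReal ((-τ) * (Real.sqrt (2 * π * v))⁻¹) := by
        rw [Real.volume_Ioc, ← ENNReal.ofReal_mul (by positivity)]
        ring_nf

set_option maxHeartbeats 4000000 in
/-- Measure of the "bad set" of the Gaussian mechanism, positive shift case. -/
lemma bad_pos (ε δ Δ θ : ℝ) (hε : 0 < ε) (hε1 : ε ≤ 1) (hδ0 : 0 < δ) (hδ1 : δ < 1) (hΔ : 0 < Δ)
    (hθ : θ ≥ (Δ / ε) * Real.sqrt (2 * Real.log (1.25 / δ)))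
    (d : ℝ) (hd : 0 < d) (hdΔ : d ≤ Δ) :
    gaussianReal 0 (Real.toNNReal (θ ^ 2)) {y : ℝ | ε * θ ^ 2 - d ^ 2 / 2 < d * y}
      ≤ ENNReal.ofReal δ := by
  set c : ℝ := Real.sqrt (2 * Real.log (1.25 / δ)) with hcdef
  have hlog : 0 < Real.log (1.25 / δ) := Real.log_pos (by rw [lt_div_iff₀ hδ0]; linarith)
  have hc : 0 < c := Real.sqrt_pos.mpr (by positivity)
  have hc2 : c ^ 2 = 2 * Real.log (1.25 / δ) := Real.sq_sqrt (by positivity)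
  have hδc : δ = 1.25 * rexp (-c ^ 2 / 2) := by
    rw [hc2]
    have h2 : -(2 * Real.log (1.25 / δ)) / 2 = -Real.log (1.25 / δ) := by ring
    rw [h2, Real.exp_neg, Real.exp_log (by positivity)]
    field_simp
  have hθ0 : 0 < θ := lt_of_lt_of_le (by positivity) hθ
  have hΔc : Δ * c ≤ ε * θ := by
    have h1 : (Δ / ε) * c * ε ≤ θ * ε := mul_le_mul_of_nonneg_right hθ (le_of_lt hε)
    have h2 : (Δ / ε) * c * ε = Δ * c := by field_simp
    linarith
  have hΔθ : Δ * c ≤ θ := by nlinarith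
  -- the coercion of the variance
  have hvco : ((Real.toNNReal (θ ^ 2)) : ℝ) = θ ^ 2 := Real.coe_toNNReal _ (sq_nonneg θ)
  have hv : Real.toNNReal (θ ^ 2) ≠ 0 := by
    intro h
    have := hvco
    rw [h] at this
    simp at this
    nlinarith
  -- the bad set is Ioi τ
  set t0 : ℝ := ε * θ ^ 2 - d ^ 2 / 2 with ht0
  set τ : ℝ := t0 / d with hτdef
  have hset : {y : ℝ | t0 < d * y} = Ioi τ := by
    ext y
    simp only [mem_setOf_eq, mem_Ioi, hτdef]
    rw [div_lt_iff₀ hd]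
    constructor <;> intro h <;> nlinarith
  rw [hset]
  -- lower bound for τ
  have hτlb : θ * (c - 1 / (2 * c)) ≤ τ := by
    have hτeq : τ = ε * θ ^ 2 / d - d / 2 := by
      rw [hτdef, ht0]; field_simp
    have h1 : c * θ ≤ ε * θ ^ 2 / Δ := by
      rw [le_div_iff₀ hΔ]
      nlinarith [mul_le_mul_of_nonneg_right hΔc (le_of_lt hθ0)]
    have h1' : ε * θ ^ 2 / Δ ≤ ε * θ ^ 2 / d := by
      apply div_le_div_of_nonneg_left (by positivity) hd hdΔ
    have h2 : d / 2 ≤ θ / (2 * c) := by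
      rw [div_le_div_iff₀ (by norm_num) (by positivity)]
      nlinarith
    rw [hτeq]
    have : θ * (c - 1 / (2 * c)) = c * θ - θ / (2 * c) := by field_simp
    linarith
  clear_value t0 τ
  rcases le_or_gt 0 τ with hτ0 | hτ0
  · -- main case : tail bound
    calc gaussianReal 0 (Real.toNNReal (θ ^ 2)) (Ioi τ)
        ≤ gaussianReal 0 (Real.toNNReal (θ ^ 2)) (Ici τ) := measure_mono Ioi_subset_Ici_self
      _ ≤ ENNReal.ofReal (rexp (-τ ^ 2 / (2 * (Real.toNNReal (θ ^ 2)))) / 2) :=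
          gaussian_tail hv hτ0
      _ ≤ ENNReal.ofReal δ := by
          apply ENNReal.ofReal_le_ofReal
          rw [hvco]
          -- key numeric inequality
          have hkey : (c ^ 2 - 1) * θ ^ 2 ≤ τ ^ 2 := by
            rcases le_or_gt (1 / (2 * c)) c with h | h
            · have hlb0 : 0 ≤ θ * (c - 1 / (2 * c)) := by nlinarith
              have hτ2 : (θ * (c - 1 / (2 * c))) ^ 2 ≤ τ ^ 2 := by nlinarith
              have hex : (θ * (c - 1 / (2 * c))) ^ 2
                  = θ ^ 2 * c ^ 2 - θ ^ 2 + (θ / (2 * c)) ^ 2 := by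
                field_simp
                ring
              nlinarith [sq_nonneg (θ / (2 * c))]
            · rw [lt_div_iff₀ (by positivity : (0:ℝ) < 2 * c)] at h
              nlinarith [sq_nonneg τ, sq_nonneg θ]
          have h25 : rexp (2⁻¹ : ℝ) ≤ 2.5 := by
            have he : rexp (2⁻¹ : ℝ) * rexp (2⁻¹ : ℝ) = rexp 1 := by
              rw [← Real.exp_add]; norm_num
            nlinarith [Real.exp_pos (2⁻¹ : ℝ), Real.exp_one_lt_d9]
          have hsplit : rexp (-τ ^ 2 / (2 * θ ^ 2))
              = rexp (c ^ 2 / 2 - τ ^ 2 / (2 * θ ^ 2)) * rexp (-c ^ 2 / 2) := by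
            rw [← Real.exp_add]; ring_nf
          have harg : c ^ 2 / 2 - τ ^ 2 / (2 * θ ^ 2) ≤ 2⁻¹ := by
            have h1 : c ^ 2 - 1 ≤ τ ^ 2 / θ ^ 2 := by
              rw [le_div_iff₀ (by positivity)]; linarith
            have h2 : τ ^ 2 / (2 * θ ^ 2) = τ ^ 2 / θ ^ 2 / 2 := by ring
            linarith
          have hmono : rexp (c ^ 2 / 2 - τ ^ 2 / (2 * θ ^ 2)) ≤ 2.5 :=
            le_trans (Real.exp_le_exp.mpr harg) h25
          rw [hδc, hsplit]
          nlinarith [Real.exp_pos (-c ^ 2 / 2)]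
  · -- small-c case : crude bound
    have hcsmall : 2 * c ^ 2 < 1 := by
      have hneg : c - 1 / (2 * c) < 0 := by
        by_contra hcon
        push_neg at hcon
        nlinarith [mul_nonneg (le_of_lt hθ0) hcon]
      have h : c < 1 / (2 * c) := by linarith
      rw [lt_div_iff₀ (by positivity : (0:ℝ) < 2 * c)] at h
      nlinarith
    have hδbig : 0.9375 ≤ δ := by
      have hlog4 : Real.log (1.25 / δ) < 1 / 4 := by nlinarith
      have hexp4 : (1.25 / δ) < rexp (1 / 4) := by
        rw [← Real.exp_log (by positivity : (0:ℝ) < 1.25 / δ)]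
        exact Real.exp_lt_exp.mpr hlog4
      have h43 : rexp (1 / 4 : ℝ) ≤ 4 / 3 := by
        have he : rexp (1 / 4 : ℝ) ^ 4 = rexp 1 := by
          rw [← Real.exp_nat_mul]; norm_num
        nlinarith [Real.exp_pos (1 / 4 : ℝ), Real.exp_one_lt_d9, sq_nonneg (rexp (1/4) - 4/3),
          sq_nonneg (rexp (1/4) + 4/3)]
      have : 1.25 / δ < 4 / 3 := lt_of_lt_of_le hexp4 h43
      rw [div_lt_div_iff₀ hδ0 (by norm_num)] at this
      linarith
    have hc25 : 2 / 5 ≤ c ^ 2 := by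
      have hlog125 : 1 / 5 ≤ Real.log (1.25 : ℝ) := by
        rw [Real.le_log_iff_exp_le (by norm_num)]
        have he : rexp (1 / 5 : ℝ) ^ 5 = rexp 1 := by
          rw [← Real.exp_nat_mul]; norm_num
        by_contra hcon
        push_neg at hcon
        have h5 : (1.25 : ℝ) ^ 5 < rexp (1 / 5 : ℝ) ^ 5 :=
          pow_lt_pow_left₀ hcon (by norm_num) (by norm_num)
        rw [he] at h5
        nlinarith [Real.exp_one_lt_d9]
      have hmono : Real.log (1.25 : ℝ) ≤ Real.log (1.25 / δ) := by
        apply Real.log_le_log (by norm_num)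
        rw [le_div_iff₀ hδ0]; nlinarith
      rw [hc2]; linarith
    -- decompose Ioi τ
    have huni : Ioi τ ⊆ Ioc τ 0 ∪ Ioi 0 := by
      intro y hy
      rcases le_or_gt y 0 with h | h
      · exact Or.inl ⟨hy, h⟩
      · exact Or.inr h
    set s : ℝ := Real.sqrt (2 * π * ((Real.toNNReal (θ ^ 2)) : ℝ)) with hsdef
    have hs0 : 0 < s := by rw [hsdef]; exact Real.sqrt_pos.mpr (by rw [hvco]; positivity)
    clear_value s
    have hstrip : (-τ) * s⁻¹ ≤ 1 / 3 := by
      have hτlb' : θ * c - θ / (2 * c) ≤ τ := by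
        have hid : θ * (c - 1 / (2 * c)) = θ * c - θ / (2 * c) := by ring
        linarith [hτlb, le_of_eq hid]
      have hmτ : -τ ≤ θ / (2 * c) := by nlinarith [mul_pos hθ0 hc]
      have h3s : 3 * (θ / (2 * c)) ≤ s := by
        rw [hsdef]
        rw [Real.le_sqrt (by positivity) (by rw [hvco]; positivity)]
        rw [hvco]
        have : (3 * (θ / (2 * c))) ^ 2 = 9 * θ ^ 2 / (4 * c ^ 2) := by
          field_simp; ring
        rw [this, div_le_iff₀ (by positivity)]
        have hπ : (3:ℝ) ≤ π := le_of_lt Real.pi_gt_three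
        have key : (48/5 : ℝ) ≤ 8 * π * c ^ 2 := by
          nlinarith [mul_nonneg (sub_nonneg.mpr hπ) (sq_nonneg c)]
        nlinarith [mul_le_mul_of_nonneg_right key (sq_nonneg θ)]
      rw [← div_eq_mul_inv, div_le_iff₀ hs0]
      nlinarith
    calc gaussianReal 0 (Real.toNNReal (θ ^ 2)) (Ioi τ)
        ≤ gaussianReal 0 (Real.toNNReal (θ ^ 2)) (Ioc τ 0 ∪ Ioi 0) := measure_mono huni
      _ ≤ gaussianReal 0 (Real.toNNReal (θ ^ 2)) (Ioc τ 0)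
          + gaussianReal 0 (Real.toNNReal (θ ^ 2)) (Ioi 0) := measure_union_le _ _
      _ ≤ ENNReal.ofReal ((-τ) * s⁻¹) + ENNReal.ofReal (1 / 2) := by
          apply add_le_add (by rw [hsdef]; exact gaussian_strip hv (le_of_lt hτ0))
          calc gaussianReal 0 (Real.toNNReal (θ ^ 2)) (Ioi 0)
              ≤ gaussianReal 0 (Real.toNNReal (θ ^ 2)) (Ici 0) :=
                measure_mono Ioi_subset_Ici_self
            _ = 1 / 2 := gaussianReal_Ici_self 0 hv
            _ = ENNReal.ofReal (1 / 2) := by norm_num [ENNReal.ofReal_div_of_pos]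
      _ ≤ ENNReal.ofReal δ := by
          rw [← ENNReal.ofReal_add (by nlinarith [hs0, hτ0, inv_nonneg.mpr (le_of_lt hs0)])
            (by norm_num)]
          apply ENNReal.ofReal_le_ofReal
          linarith


set_option maxHeartbeats 1000000 in
/-- Pointwise approximate indistinguishability of two Gaussians at distance at most Δ. -/
lemma pointwise (ε δ Δ θ : ℝ) (hε : 0 < ε) (hε1 : ε ≤ 1) (hδ0 : 0 < δ) (hδ1 : δ < 1)
    (hΔ : 0 < Δ) (hθ : θ ≥ (Δ / ε) * Real.sqrt (2 * Real.log (1.25 / δ)))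
    (a b : ℝ) (hab : |a - b| ≤ Δ) {A : Set ℝ} (hA : MeasurableSet A) :
    gaussianReal a (Real.toNNReal (θ ^ 2)) A
      ≤ ENNReal.ofReal (rexp ε) * gaussianReal b (Real.toNNReal (θ ^ 2)) A
        + ENNReal.ofReal δ := by
  have hlog : 0 < Real.log (1.25 / δ) := Real.log_pos (by rw [lt_div_iff₀ hδ0]; linarith)
  have hθ0 : 0 < θ := lt_of_lt_of_le (by positivity) hθ
  have hvco : ((Real.toNNReal (θ ^ 2)) : ℝ) = θ ^ 2 := Real.coe_toNNReal _ (sq_nonneg θ)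
  have hv : Real.toNNReal (θ ^ 2) ≠ 0 := by
    intro h
    have h2 := hvco
    rw [h] at h2
    simp only [NNReal.coe_zero] at h2
    nlinarith
  by_cases hd0 : a - b = 0
  · have hab' : a = b := by linarith
    subst hab'
    calc gaussianReal a (Real.toNNReal (θ ^ 2)) A
        = 1 * gaussianReal a (Real.toNNReal (θ ^ 2)) A := (one_mul _).symm
      _ ≤ ENNReal.ofReal (rexp ε) * gaussianReal a (Real.toNNReal (θ ^ 2)) A :=
          mul_le_mul_left (by
            rw [show (1 : ENNReal) = ENNReal.ofReal 1 by simp]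
            exact ENNReal.ofReal_le_ofReal (Real.one_le_exp (le_of_lt hε))) _
      _ ≤ _ := self_le_add_right _ _
  · set S : Set ℝ := {x : ℝ | (a - b) * (x - (a + b) / 2) ≤ ε * θ ^ 2} with hSdef
    have hSm : MeasurableSet S := measurableSet_le (by fun_prop) measurable_const
    have hsplit : gaussianReal a (Real.toNNReal (θ ^ 2)) A
        ≤ gaussianReal a (Real.toNNReal (θ ^ 2)) (A ∩ S)
          + gaussianReal a (Real.toNNReal (θ ^ 2)) Sᶜ := by
      refine le_trans (measure_mono ?_) (measure_union_le _ _)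
      intro x hx
      by_cases h : x ∈ S
      · exact Or.inl ⟨hx, h⟩
      · exact Or.inr h
    have part1 : gaussianReal a (Real.toNNReal (θ ^ 2)) (A ∩ S)
        ≤ ENNReal.ofReal (rexp ε) * gaussianReal b (Real.toNNReal (θ ^ 2)) A := by
      rw [gaussianReal_apply a hv, gaussianReal_apply b hv]
      have hpdf : ∀ x ∈ A ∩ S, gaussianPDF a (Real.toNNReal (θ ^ 2)) x
          ≤ ENNReal.ofReal (rexp ε) * gaussianPDF b (Real.toNNReal (θ ^ 2)) x := by
        intro x hx
        have hxS : (a - b) * (x - (a + b) / 2) ≤ ε * θ ^ 2 := hx.2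
        rw [gaussianPDF, gaussianPDF, ← ENNReal.ofReal_mul (le_of_lt (Real.exp_pos ε))]
        apply ENNReal.ofReal_le_ofReal
        unfold gaussianPDFReal
        have hexp : rexp (-(x - a) ^ 2 / (2 * ((Real.toNNReal (θ ^ 2)) : ℝ)))
            ≤ rexp ε * rexp (-(x - b) ^ 2 / (2 * ((Real.toNNReal (θ ^ 2)) : ℝ))) := by
          rw [← Real.exp_add]
          apply Real.exp_le_exp.mpr
          rw [hvco]
          have hnum : -(x - a) ^ 2 ≤ 2 * θ ^ 2 * ε + -(x - b) ^ 2 := by nlinarith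
          calc -(x - a) ^ 2 / (2 * θ ^ 2)
              ≤ (2 * θ ^ 2 * ε + -(x - b) ^ 2) / (2 * θ ^ 2) :=
                (div_le_div_iff_of_pos_right (by positivity)).mpr hnum
            _ = ε + -(x - b) ^ 2 / (2 * θ ^ 2) := by field_simp
        exact le_trans (mul_le_mul_of_nonneg_left hexp (by positivity)) (le_of_eq (by ring))
      calc ∫⁻ x in A ∩ S, gaussianPDF a (Real.toNNReal (θ ^ 2)) x
          ≤ ∫⁻ x in A ∩ S, ENNReal.ofReal (rexp ε) * gaussianPDF b (Real.toNNReal (θ ^ 2)) x :=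
            setLIntegral_mono ((measurable_gaussianPDF b _).const_mul _) hpdf
        _ = ENNReal.ofReal (rexp ε) * ∫⁻ x in A ∩ S, gaussianPDF b (Real.toNNReal (θ ^ 2)) x :=
            lintegral_const_mul _ (measurable_gaussianPDF b _)
        _ ≤ ENNReal.ofReal (rexp ε) * ∫⁻ x in A, gaussianPDF b (Real.toNNReal (θ ^ 2)) x :=
            mul_le_mul_right (lintegral_mono_set inter_subset_left) _
    have part2 : gaussianReal a (Real.toNNReal (θ ^ 2)) Sᶜ ≤ ENNReal.ofReal δ := by
      have hmap : gaussianReal a (Real.toNNReal (θ ^ 2))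
          = (gaussianReal 0 (Real.toNNReal (θ ^ 2))).map (· + a) := by
        rw [gaussianReal_map_add_const, zero_add]
      rw [hmap, Measure.map_apply (measurable_add_const a) hSm.compl]
      have hpre : (· + a) ⁻¹' Sᶜ
          = {y : ℝ | ε * θ ^ 2 - (a - b) ^ 2 / 2 < (a - b) * y} := by
        ext y
        simp only [hSdef, mem_preimage, mem_compl_iff, mem_setOf_eq, not_le]
        constructor <;> intro h <;> nlinarith
      rw [hpre]
      rcases lt_trichotomy (a - b) 0 with hlt | heq | hgt
      · have hmeas : MeasurableSet {y : ℝ | ε * θ ^ 2 - (a - b) ^ 2 / 2 < (a - b) * y} :=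
          measurableSet_lt measurable_const (by fun_prop)
        have hprene : (fun y : ℝ => -y) ⁻¹' {y : ℝ | ε * θ ^ 2 - (a - b) ^ 2 / 2 < (a - b) * y}
            = {y : ℝ | ε * θ ^ 2 - (-(a - b)) ^ 2 / 2 < (-(a - b)) * y} := by
          ext y
          simp only [mem_preimage, mem_setOf_eq]
          constructor <;> intro h <;> nlinarith
        calc gaussianReal 0 (Real.toNNReal (θ ^ 2))
              {y : ℝ | ε * θ ^ 2 - (a - b) ^ 2 / 2 < (a - b) * y}
            = ((gaussianReal 0 (Real.toNNReal (θ ^ 2))).map (fun y : ℝ => -y))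
              {y : ℝ | ε * θ ^ 2 - (a - b) ^ 2 / 2 < (a - b) * y} := by
              rw [gaussianReal_map_neg]
          _ = gaussianReal 0 (Real.toNNReal (θ ^ 2))
              {y : ℝ | ε * θ ^ 2 - (-(a - b)) ^ 2 / 2 < (-(a - b)) * y} := by
              rw [Measure.map_apply measurable_neg hmeas, hprene]
          _ ≤ ENNReal.ofReal δ := by
              apply bad_pos ε δ Δ θ hε hε1 hδ0 hδ1 hΔ hθ (-(a - b)) (by linarith)
              calc -(a - b) ≤ |a - b| := neg_le_abs _
                _ ≤ Δ := hab
      · exact absurd heq hd0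
      · apply bad_pos ε δ Δ θ hε hε1 hδ0 hδ1 hΔ hθ (a - b) hgt
        calc a - b ≤ |a - b| := le_abs_self _
          _ ≤ Δ := hab
    exact le_trans hsplit (add_le_add part1 part2)


end PufferfishAux

open PufferfishAux in
theorem gaussian_mechanism_pufferfish_highPrivacy
    (ε δ Δ : ℝ) (hε : 0 < ε) (hε1 : ε ≤ 1) (hδ0 : 0 < δ) (hδ1 : δ < 1) (hΔ : 0 < Δ)
    (Pi Pj : Measure ℝ) [IsProbabilityMeasure Pi] [IsProbabilityMeasure Pj]
    (μc : Measure (ℝ × ℝ)) [IsProbabilityMeasure μc]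
    (hfst : μc.map Prod.fst = Pi) (hsnd : μc.map Prod.snd = Pj)
    (hsupp : ∀ᵐ p ∂μc, |p.1 - p.2| ≤ Δ)
    (θ : ℝ) (hθ : θ ≥ (Δ / ε) * Real.sqrt (2 * Real.log (1.25 / δ)))
    (Qi Qj : Measure ℝ)
    (hQi : Qi = Pi.bind (fun x => gaussianReal x (Real.toNNReal (θ ^ 2))))
    (hQj : Qj = Pj.bind (fun x => gaussianReal x (Real.toNNReal (θ ^ 2)))) :
    ∀ A : Set ℝ, MeasurableSet A →
      Qi A ≤ ENNReal.ofReal (Real.exp ε) * Qj A + ENNReal.ofReal δ ∧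
      Qj A ≤ ENNReal.ofReal (Real.exp ε) * Qi A + ENNReal.ofReal δ := by
  intro A hA
  have hk : Measurable (fun x : ℝ => gaussianReal x (Real.toNNReal (θ ^ 2))) :=
    measurable_gaussianReal_fun _
  have hkA : Measurable (fun x : ℝ => gaussianReal x (Real.toNNReal (θ ^ 2)) A) :=
    (Measure.measurable_coe hA).comp hk
  have hQiA : Qi A = ∫⁻ p, gaussianReal p.1 (Real.toNNReal (θ ^ 2)) A ∂μc := by
    rw [hQi, Measure.bind_apply hA hk.aemeasurable, ← hfst,
      lintegral_map hkA measurable_fst]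
  have hQjA : Qj A = ∫⁻ p, gaussianReal p.2 (Real.toNNReal (θ ^ 2)) A ∂μc := by
    rw [hQj, Measure.bind_apply hA hk.aemeasurable, ← hsnd,
      lintegral_map hkA measurable_snd]
  have hkA1 : Measurable (fun p : ℝ × ℝ => gaussianReal p.1 (Real.toNNReal (θ ^ 2)) A) :=
    hkA.comp measurable_fst
  have hkA2 : Measurable (fun p : ℝ × ℝ => gaussianReal p.2 (Real.toNNReal (θ ^ 2)) A) :=
    hkA.comp measurable_snd
  constructor
  · rw [hQiA, hQjA]
    calc ∫⁻ p, gaussianReal p.1 (Real.toNNReal (θ ^ 2)) A ∂μc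
        ≤ ∫⁻ p, (ENNReal.ofReal (Real.exp ε) * gaussianReal p.2 (Real.toNNReal (θ ^ 2)) A
            + ENNReal.ofReal δ) ∂μc := by
          apply lintegral_mono_ae
          filter_upwards [hsupp] with p hp
          exact pointwise ε δ Δ θ hε hε1 hδ0 hδ1 hΔ hθ p.1 p.2 hp hA
      _ = ENNReal.ofReal (Real.exp ε) * ∫⁻ p, gaussianReal p.2 (Real.toNNReal (θ ^ 2)) A ∂μc
            + ENNReal.ofReal δ := by
          rw [lintegral_add_right _ measurable_const, lintegral_const, measure_univ, mul_one,
            lintegral_const_mul _ hkA2]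
  · rw [hQiA, hQjA]
    calc ∫⁻ p, gaussianReal p.2 (Real.toNNReal (θ ^ 2)) A ∂μc
        ≤ ∫⁻ p, (ENNReal.ofReal (Real.exp ε) * gaussianReal p.1 (Real.toNNReal (θ ^ 2)) A
            + ENNReal.ofReal δ) ∂μc := by
          apply lintegral_mono_ae
          filter_upwards [hsupp] with p hp
          exact pointwise ε δ Δ θ hε hε1 hδ0 hδ1 hΔ hθ p.2 p.1 (by rw [abs_sub_comm]; exact hp) hA
      _ = ENNReal.ofReal (Real.exp ε) * ∫⁻ p, gaussianReal p.1 (Real.toNNReal (θ ^ 2)) A ∂μc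
            + ENNReal.ofReal δ := by
          rw [lintegral_add_right _ measurable_const, lintegral_const, measure_univ, mul_one,
            lintegral_const_mul _ hkA1]
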